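/- Let P be a distribution of (X,Y) on R^d × {0,1} whose regression function η belongs to the Hölder class Σ(β, L, R^d) and whose marginal P_X satisfies the strong density assumption with parameters (c0, r0, μ_min, μ_max, C). Then for any κ > 0 there exist constants L' > 0 and t0 > 0 such that for every x in the support of P_X and every 0 < t ≤ t0, P_X( |η(X) − η(x)| ≤ t and X ∈ B(x, κ t^{1/(1∧β)}) ) ≥ L' t^{d/(1∧β)}. -/

import Mathlib

open MeasureTheory Metric Set
open scoped ENNReal NNReal

noncomputable section

/-- Feature space: `ℝ^d` with the Euclidean norm. -/
abbrev Euc (d : ℕ) := EuclideanSpace ℝ (Fin d)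

/-- A sample of size `n`: `n` points of `ℝ^d × {0,1}` (labels modelled by `Bool`). -/
abbrev Sample (d n : ℕ) := Fin n → Euc d × Bool

/-- Joint law of `(X,Y)` determined by the marginal `PX` and the regression
function `η(x) = P(Y = 1 | X = x)`. -/
def jointLaw {d : ℕ} (PX : Measure (Euc d)) (η : Euc d → ℝ) : Measure (Euc d × Bool) :=
  PX.bind fun x =>
    ENNReal.ofReal (η x) • Measure.dirac (x, true) +
      ENNReal.ofReal (1 - η x) • Measure.dirac (x, false)

/-- Law `P^{⊗n}` of an i.i.d. sample of size `n`. -/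
def sampleLaw {d : ℕ} (PX : Measure (Euc d)) (η : Euc d → ℝ) (n : ℕ) :
    Measure (Sample d n) :=
  Measure.pi fun _ => jointLaw PX η

/-- Misclassification risk `R(f) = P(Y ≠ f(X))` of a decision rule `f`. -/
def risk {d : ℕ} (PX : Measure (Euc d)) (η : Euc d → ℝ) (f : Euc d → Bool) : ℝ :=
  ∫ x, (if f x then 1 - η x else η x) ∂PX

/-- The Bayes rule `f*(x) = 1{η(x) ≥ 1/2}`. -/
def bayes {d : ℕ} (η : Euc d → ℝ) : Euc d → Bool := fun x => decide ((1 : ℝ) / 2 ≤ η x)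

/-- The plug-in rule `1{g ≥ 1/2}` associated with a function `g`. -/
def plugin {d : ℕ} (g : Euc d → ℝ) : Euc d → Bool := fun x => decide ((1 : ℝ) / 2 ≤ g x)

/-- Margin (low noise) assumption MA(α, C0):
`P_X(0 < |η(X) − 1/2| ≤ t) ≤ C0 t^α` for all `t > 0`. -/
def Margin {d : ℕ} (PX : Measure (Euc d)) (η : Euc d → ℝ) (α C0 : ℝ) : Prop :=
  ∀ t : ℝ, 0 < t →
    PX {x | 0 < |η x - 1 / 2| ∧ |η x - 1 / 2| ≤ t} ≤ ENNReal.ofReal (C0 * t ^ α)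

/-- Taylor polynomial of degree `N` of `g` at `x`, evaluated at `x'`. -/
def taylorPoly {d : ℕ} (g : Euc d → ℝ) (N : ℕ) (x x' : Euc d) : ℝ :=
  ∑ k ∈ Finset.range (N + 1), (k.factorial : ℝ)⁻¹ * iteratedFDeriv ℝ k g x (fun _ => x' - x)

/-- The Hölder class `Σ(β, L, ℝ^d)`: `g` is `⌊β⌋` times continuously differentiable
(`⌊β⌋` = largest integer strictly less than `β`, i.e. `⌈β⌉₊ - 1` for `β > 0`) and its
Taylor polynomial of degree `⌊β⌋` approximates it to order `L‖x − x'‖^β`. -/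
def HolderClass {d : ℕ} (β L : ℝ) (g : Euc d → ℝ) : Prop :=
  ContDiff ℝ (⌈β⌉₊ - 1 : ℕ) g ∧
    ∀ x x' : Euc d, |g x' - taylorPoly g (⌈β⌉₊ - 1) x x'| ≤ L * ‖x' - x‖ ^ β

/-- `(c0, r0)`-regularity of a set `A`:
`λ[A ∩ B(x,r)] ≥ c0 λ[B(x,r)]` for all `0 < r ≤ r0` and `x ∈ A`. -/
def Regular {d : ℕ} (c0 r0 : ℝ) (A : Set (Euc d)) : Prop :=
  ∀ x ∈ A, ∀ r : ℝ, 0 < r → r ≤ r0 →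
    ENNReal.ofReal c0 * volume (closedBall x r) ≤ volume (A ∩ closedBall x r)

/-- Strong density assumption with parameters `(c0, r0, μmin, μmax, K)`. -/
def StrongDensity {d : ℕ} (PX : Measure (Euc d)) (c0 r0 μmin μmax : ℝ)
    (K : Set (Euc d)) : Prop :=
  ∃ A : Set (Euc d), IsCompact A ∧ A ⊆ K ∧ Regular c0 r0 A ∧
    ∃ μ : Euc d → ℝ, Measurable μ ∧ (∀ x ∈ A, μmin ≤ μ x ∧ μ x ≤ μmax) ∧
      (∀ x, x ∉ A → μ x = 0) ∧
      PX = volume.withDensity fun x => ENNReal.ofReal (μ x)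

/-- Mild density assumption with parameters `(c0, r0, μmax, K)`. -/
def MildDensity {d : ℕ} (PX : Measure (Euc d)) (c0 r0 μmax : ℝ)
    (K : Set (Euc d)) : Prop :=
  ∃ A : Set (Euc d), IsCompact A ∧ A ⊆ K ∧ Regular c0 r0 A ∧
    ∃ μ : Euc d → ℝ, Measurable μ ∧ (∀ x ∈ A, 0 ≤ μ x ∧ μ x ≤ μmax) ∧
      (∀ x, x ∉ A → μ x = 0) ∧
      PX = volume.withDensity fun x => ENNReal.ofReal (μ x)

/-- The class `P_Σ(α, C0, β, L, c0, r0, μmin, μmax, K)`, a distribution being encoded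
by its marginal `PX` together with its regression function `η`. -/
def MemPS {d : ℕ} (α C0 β L c0 r0 μmin μmax : ℝ) (K : Set (Euc d))
    (PX : Measure (Euc d)) (η : Euc d → ℝ) : Prop :=
  IsProbabilityMeasure PX ∧ Measurable η ∧ (∀ x, η x ∈ Icc (0 : ℝ) 1) ∧
    Margin PX η α C0 ∧ HolderClass β L η ∧ StrongDensity PX c0 r0 μmin μmax K

/-- Topological support of a measure on `ℝ^d`. -/
def msupport {d : ℕ} (PX : Measure (Euc d)) : Set (Euc d) :=
  {x | ∀ r : ℝ, 0 < r → 0 < PX (ball x r)}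

/-- `f` hits the level `a` at `x0`. -/
def Hits {d : ℕ} (f : Euc d → ℝ) (a : ℝ) (x0 : Euc d) : Prop :=
  f x0 = a ∧ ∀ r : ℝ, 0 < r → ∃ x ∈ closedBall x0 r, f x ≠ a

/-- `f` crosses the level `a` at `x0`. -/
def Crosses {d : ℕ} (f : Euc d → ℝ) (a : ℝ) (x0 : Euc d) : Prop :=
  ∀ r : ℝ, 0 < r → (∃ x ∈ closedBall x0 r, f x < a) ∧ ∃ x ∈ closedBall x0 r, a < f x

/-- Expected excess risk `E[R(f̂_n)] − R(f*)` of a plug-in classifier built from the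
estimator `hatη` of the regression function. -/
def expExcess {d : ℕ} (PX : Measure (Euc d)) (η : Euc d → ℝ) {n : ℕ}
    (hatη : Sample d n → Euc d → ℝ) : ℝ :=
  (∫ ω, risk PX η (plugin (hatη ω)) ∂sampleLaw PX η n) - risk PX η (bayes η)

/-- Expected excess risk `E[R(f̂_n)] − R(f*)` of a (general) classifier. -/
def expExcessRule {d : ℕ} (PX : Measure (Euc d)) (η : Euc d → ℝ) {n : ℕ}
    (fhat : Sample d n → Euc d → Bool) : ℝ :=
  (∫ ω, risk PX η (fhat ω) ∂sampleLaw PX η n) - risk PX η (bayes η)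

/-- Empirical misclassification risk of the plug-in rule `1{g ≥ 1/2}` on a sample. -/
def empRisk {d n : ℕ} (ω : Sample d n) (g : Euc d → ℝ) : ℝ :=
  (n : ℝ)⁻¹ * ∑ i : Fin n, if plugin g (ω i).1 ≠ (ω i).2 then (1 : ℝ) else 0

lemma holder_local {d : ℕ} {β L : ℝ} (hβ : 0 < β) (hL : 0 < L) {η : Euc d → ℝ}
    (hH : HolderClass β L η) (A : Set (Euc d)) (hA : IsCompact A) :
    ∃ M : ℝ, 0 < M ∧ ∀ x ∈ A, ∀ y : Euc d, ‖y - x‖ ≤ 1 →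
      |η y - η x| ≤ M * ‖y - x‖ ^ (min 1 β) := by
  rcases le_or_gt β 1 with hβ1 | hβ1
  · refine ⟨L, hL, fun x _ y _ => ?_⟩
    have hceil : ⌈β⌉₊ = 1 := by
      refine le_antisymm (Nat.ceil_le.2 (by exact_mod_cast hβ1)) (Nat.one_le_ceil_iff.2 hβ)
    have htay : taylorPoly η (⌈β⌉₊ - 1) x y = η x := by
      rw [hceil]; simp [taylorPoly, iteratedFDeriv_zero_apply]
    have := hH.2 x y
    rw [htay] at this
    rwa [min_eq_right hβ1]
  · -- β > 1 : η is C¹, Lipschitz on a neighborhood of A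
    have hceil2 : 2 ≤ ⌈β⌉₊ := by exact_mod_cast Nat.lt_ceil.2 (by exact_mod_cast hβ1)
    have h1n : (1 : ℕ) ≤ ⌈β⌉₊ - 1 := by omega
    have h1n' : (1 : WithTop ℕ∞) ≤ ((⌈β⌉₊ - 1 : ℕ) : WithTop ℕ∞) := by exact_mod_cast h1n
    have hcont : Continuous (fderiv ℝ η) := hH.1.continuous_fderiv (by exact_mod_cast (show ⌈β⌉₊ - 1 ≠ 0 by omega))
    have hdiff : Differentiable ℝ η := hH.1.differentiable (by exact_mod_cast (show ⌈β⌉₊ - 1 ≠ 0 by omega))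
    obtain ⟨C, hC⟩ := (hA.cthickening (r := 1)).exists_bound_of_continuousOn
      hcont.continuousOn
    refine ⟨max C 1, lt_of_lt_of_le one_pos (le_max_right _ _), fun x hx y hy => ?_⟩
    have hsub : closedBall x 1 ⊆ cthickening 1 A := fun z hz =>
      mem_cthickening_of_dist_le z x 1 A hx (by simpa [dist_comm] using hz)
    have hyB : y ∈ closedBall x 1 := by simpa [mem_closedBall, dist_eq_norm] using hy
    have hxB : x ∈ closedBall x 1 := mem_closedBall_self one_pos.le
    have := (convex_closedBall x 1).norm_image_sub_le_of_norm_fderiv_le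
      (fun z _ => hdiff.differentiableAt)
      (fun z hz => (hC _ (hsub hz)).trans (le_max_left C 1)) hxB hyB
    have hmin : min 1 β = 1 := min_eq_left hβ1.le
    rw [hmin, Real.rpow_one]
    simpa [Real.norm_eq_abs] using this

/-- Lemma 6.1. Under the Hölder and strong density assumptions, for
every `κ > 0` there are `L' > 0` and `t0 > 0` such that for every `x` in the support of
`P_X` and every `0 < t ≤ t0`,
`P_X(|η(X) − η(x)| ≤ t, X ∈ B(x, κ t^{1/(1∧β)})) ≥ L' t^{d/(1∧β)}`. -/
theorem stmt18 (d : ℕ) (hd : 1 ≤ d) (β L c0 r0 μmin μmax : ℝ) (hβ : 0 < β) (hL : 0 < L)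
    (hc0 : 0 < c0) (hr0 : 0 < r0) (hμmin : 0 < μmin) (hμ : μmin ≤ μmax)
    (K : Set (Euc d)) (hK : IsCompact K)
    (PX : Measure (Euc d)) (η : Euc d → ℝ)
    (hP : IsProbabilityMeasure PX) (hη : Measurable η) (hη1 : ∀ x, η x ∈ Icc (0 : ℝ) 1)
    (hH : HolderClass β L η) (hSD : StrongDensity PX c0 r0 μmin μmax K)
    (κ : ℝ) (hκ : 0 < κ) :
    ∃ L' t0 : ℝ, 0 < L' ∧ 0 < t0 ∧
      ∀ x ∈ msupport PX, ∀ t : ℝ, 0 < t → t ≤ t0 →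
        ENNReal.ofReal (L' * t ^ ((d : ℝ) / min 1 β)) ≤
          PX ({y | |η y - η x| ≤ t} ∩ closedBall x (κ * t ^ (1 / min 1 β))) := by
  obtain ⟨A, hAc, hAK, hreg, μ, hμmeas, hμb, hμ0, hPXeq⟩ := hSD
  obtain ⟨M, hM, hMb⟩ := holder_local hβ hL hH A hAc
  set γ := min 1 β with hγdef
  have hγ0 : 0 < γ := lt_min one_pos hβ
  have hγ1 : γ ≤ 1 := min_le_left _ _
  set c := min κ (min 1 ((1 / M) ^ (1 / γ) : ℝ)) with hcdef
  have hc : 0 < c := lt_min hκ (lt_min one_pos (Real.rpow_pos_of_pos (by positivity) _))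
  have hcκ : c ≤ κ := min_le_left _ _
  have hc1 : c ≤ 1 := (min_le_right _ _).trans (min_le_left _ _)
  have hcM : c ≤ (1 / M) ^ (1 / γ) := (min_le_right _ _).trans (min_le_right _ _)
  set vd := (volume (ball (0 : Euc d) 1)).toReal with hvddef
  have hvd : 0 < vd :=
    ENNReal.toReal_pos (measure_ball_pos _ _ one_pos).ne' measure_ball_lt_top.ne
  refine ⟨μmin * c0 * c ^ d * vd, min 1 (r0 ^ γ), by positivity,
    lt_min one_pos (Real.rpow_pos_of_pos hr0 _), ?_⟩
  intro x hx t ht ht0'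
  have ht1 : t ≤ 1 := ht0'.trans (min_le_left _ _)
  have htr : t ≤ r0 ^ γ := ht0'.trans (min_le_right _ _)
  -- x belongs to A
  have hxA : x ∈ A := by
    by_contra hxA
    obtain ⟨r, hr, hball⟩ := Metric.isOpen_iff.1 hAc.isClosed.isOpen_compl x hxA
    have hpos := hx r hr
    rw [hPXeq, withDensity_apply _ measurableSet_ball] at hpos
    have hzero : ∫⁻ y in ball x r, ENNReal.ofReal (μ y) ∂volume = 0 := by
      rw [setLIntegral_congr_fun measurableSet_ball
        (fun y hy => by
          dsimp only; rw [hμ0 y (hball hy)] ; simp : EqOn (fun y => ENNReal.ofReal (μ y))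
            (fun _ => (0 : ℝ≥0∞)) (ball x r))]
      simp
    rw [hzero] at hpos
    exact lt_irrefl _ hpos
  set ρ := c * t ^ (1 / γ) with hρdef
  have htpow : 0 < t ^ (1 / γ) := Real.rpow_pos_of_pos ht _
  have hρ0 : 0 < ρ := by positivity
  have htpow1 : t ^ (1 / γ) ≤ 1 := Real.rpow_le_one ht.le ht1 (by positivity)
  have hρ1 : ρ ≤ 1 := by
    calc ρ ≤ 1 * 1 := mul_le_mul hc1 htpow1 htpow.le one_pos.le
    _ = 1 := one_mul 1
  have hρr0 : ρ ≤ r0 := by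
    have h1 : t ^ (1 / γ) ≤ (r0 ^ γ) ^ (1 / γ) :=
      Real.rpow_le_rpow ht.le htr (by positivity)
    have h2 : (r0 ^ γ) ^ (1 / γ) = r0 := by
      rw [← Real.rpow_mul hr0.le, mul_one_div, div_self hγ0.ne', Real.rpow_one]
    calc ρ ≤ 1 * t ^ (1 / γ) := mul_le_mul_of_nonneg_right hc1 htpow.le
    _ ≤ r0 := by rw [one_mul]; rw [h2] at h1; exact h1
  have hρκ : ρ ≤ κ * t ^ (1 / γ) := mul_le_mul_of_nonneg_right hcκ htpow.le
  -- the small ball is inside the target set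
  have hsub1 : closedBall x ρ ⊆ {y | |η y - η x| ≤ t} := by
    intro y hy
    have hnorm : ‖y - x‖ ≤ ρ := by rwa [mem_closedBall, dist_eq_norm] at hy
    have hle1 : ‖y - x‖ ≤ 1 := hnorm.trans hρ1
    have h1 : |η y - η x| ≤ M * ‖y - x‖ ^ γ := hMb x hxA y hle1
    have h2 : ‖y - x‖ ^ γ ≤ ρ ^ γ :=
      Real.rpow_le_rpow (norm_nonneg _) hnorm hγ0.le
    have h3 : ρ ^ γ = c ^ γ * t := by
      rw [hρdef, Real.mul_rpow hc.le htpow.le, ← Real.rpow_mul ht.le,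
        one_div_mul_cancel hγ0.ne', Real.rpow_one]
    have h4 : c ^ γ ≤ 1 / M := by
      calc c ^ γ ≤ ((1 / M) ^ (1 / γ)) ^ γ :=
        Real.rpow_le_rpow hc.le hcM hγ0.le
      _ = 1 / M := by
        rw [← Real.rpow_mul (by positivity), one_div_mul_cancel hγ0.ne', Real.rpow_one]
    have h5 : M * c ^ γ ≤ 1 := by
      have := mul_le_mul_of_nonneg_left h4 hM.le
      rwa [mul_one_div, div_self hM.ne'] at this
    have h6 : M * ρ ^ γ ≤ t := by
      rw [h3, ← mul_assoc]
      nlinarith [mul_le_mul_of_nonneg_right h5 ht.le]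
    show |η y - η x| ≤ t
    exact (h1.trans (mul_le_mul_of_nonneg_left h2 hM.le)).trans h6
  have hsub : A ∩ closedBall x ρ ⊆
      {y | |η y - η x| ≤ t} ∩ closedBall x (κ * t ^ (1 / γ)) := fun y hy =>
    ⟨hsub1 hy.2, closedBall_subset_closedBall hρκ hy.2⟩
  have hsmeas : MeasurableSet (A ∩ closedBall x ρ) :=
    hAc.isClosed.measurableSet.inter measurableSet_closedBall
  -- lower bound PX on A ∩ closedBall x ρ
  have hPXlb : ENNReal.ofReal μmin * volume (A ∩ closedBall x ρ) ≤
      PX (A ∩ closedBall x ρ) := by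
    rw [hPXeq, withDensity_apply _ hsmeas]
    calc ENNReal.ofReal μmin * volume (A ∩ closedBall x ρ)
        = ∫⁻ _ in A ∩ closedBall x ρ, ENNReal.ofReal μmin ∂volume := by
          rw [setLIntegral_const, mul_comm]
      _ ≤ ∫⁻ y in A ∩ closedBall x ρ, ENNReal.ofReal (μ y) ∂volume := by
          refine setLIntegral_mono (hμmeas.ennreal_ofReal) fun y hy => ?_
          exact ENNReal.ofReal_le_ofReal (hμb y hy.1).1
  -- volume computation
  have hvol : volume (closedBall x ρ) = ENNReal.ofReal (ρ ^ d * vd) := by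
    rw [Measure.addHaar_closedBall _ _ hρ0.le]
    simp only [finrank_euclideanSpace, Fintype.card_fin]
    rw [ENNReal.ofReal_mul (by positivity), hvddef,
      ENNReal.ofReal_toReal measure_ball_lt_top.ne]
  have hρd : ρ ^ d = c ^ d * t ^ ((d : ℝ) / γ) := by
    rw [hρdef, mul_pow, ← Real.rpow_natCast (t ^ (1 / γ)) d, ← Real.rpow_mul ht.le]
    congr 2
    field_simp
  calc ENNReal.ofReal (μmin * c0 * c ^ d * vd * t ^ ((d : ℝ) / γ))
      = ENNReal.ofReal μmin * (ENNReal.ofReal c0 * ENNReal.ofReal (ρ ^ d * vd)) := by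
        rw [← ENNReal.ofReal_mul hc0.le, ← ENNReal.ofReal_mul hμmin.le]
        congr 1
        rw [hρd]; ring
    _ = ENNReal.ofReal μmin * (ENNReal.ofReal c0 * volume (closedBall x ρ)) := by
        rw [hvol]
    _ ≤ ENNReal.ofReal μmin * volume (A ∩ closedBall x ρ) := by
        exact mul_le_mul_of_nonneg_left (hreg x hxA ρ hρ0 hρr0) (by simp)
    _ ≤ PX (A ∩ closedBall x ρ) := hPXlb
    _ ≤ PX ({y | |η y - η x| ≤ t} ∩ closedBall x (κ * t ^ (1 / γ))) := measure_mono hsub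


end
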